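/- Let Y be a DPP with kernel K, A, B disjoint subsets with ℙ(A ⊆ Y, B ∩ Y = ∅) > 0, and k ≠ l two points outside A ∪ B. If ℙ(A ⊆ Y, (B ∪ {l}) ∩ Y = ∅) > 0, then ℙ(k ∈ Y | A ⊆ Y, (B ∪ {l}) ∩ Y = ∅) ≥ ℙ(k ∈ Y | A ⊆ Y, B ∩ Y = ∅). -/

import Mathlib

/-- The principal submatrix of `K` indexed by a finite subset `A`. -/
noncomputable def subMat {N : ℕ} (K : Matrix (Fin N) (Fin N) ℝ) (A : Finset (Fin N)) :
    Matrix A A ℝ :=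
  K.submatrix (fun i : A => (i : Fin N)) (fun j : A => (j : Fin N))

/-- `ℙ(A ⊆ Y, B ∩ Y = ∅)` for a point process with distribution `P`. -/
noncomputable def jointProb {N : ℕ} (P : Finset (Fin N) → ℝ) (A B : Finset (Fin N)) : ℝ :=
  ∑ C ∈ Finset.univ.filter (fun C => A ⊆ C ∧ Disjoint B C), P C

open Matrix

variable {N : ℕ}

/-- The matrix equal to `M` on `S × S` and to the identity elsewhere. -/
noncomputable def extMat (M : Matrix (Fin N) (Fin N) ℝ) (S : Finset (Fin N)) :
    Matrix (Fin N) (Fin N) ℝ :=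
  fun i j => if i ∈ S ∧ j ∈ S then M i j else if i = j then 1 else 0

lemma det_extMat {ι : Type} [Fintype ι] [DecidableEq ι]
    (M : Matrix (Fin N) (Fin N) ℝ) (S : Finset (Fin N))
    (f : ι → Fin N) (hinj : Function.Injective f)
    (hrange : ∀ x, x ∈ S ↔ ∃ i, f i = x) :
    (extMat M S).det = (M.submatrix f f).det := by
  classical
  have hbij : Function.Bijective (fun i : ι => (⟨f i, (hrange _).2 ⟨i, rfl⟩⟩ : {x // x ∈ S})) := by
    constructor
    · intro a b hab
      exact hinj (congrArg Subtype.val hab)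
    · rintro ⟨x, hx⟩
      obtain ⟨i, rfl⟩ := (hrange x).1 hx
      exact ⟨i, rfl⟩
  let e : (ι ⊕ {x // ¬ x ∈ S}) ≃ Fin N :=
    (Equiv.sumCongr (Equiv.ofBijective _ hbij) (Equiv.refl _)).trans (Equiv.sumCompl (· ∈ S))
  have he1 : ∀ i : ι, e (Sum.inl i) = f i := fun i => rfl
  have he2 : ∀ x : {x // ¬ x ∈ S}, e (Sum.inr x) = x.val := fun x => rfl
  have hsub : (extMat M S).submatrix e e
      = fromBlocks (M.submatrix f f) 0 0 (1 : Matrix {x // ¬ x ∈ S} {x // ¬ x ∈ S} ℝ) := by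
    ext i j
    rcases i with i | i <;> rcases j with j | j <;>
      simp only [submatrix_apply, he1, he2, fromBlocks_apply₁₁, fromBlocks_apply₁₂,
        fromBlocks_apply₂₁, fromBlocks_apply₂₂, extMat]
    · rw [if_pos ⟨(hrange _).2 ⟨i, rfl⟩, (hrange _).2 ⟨j, rfl⟩⟩]
    · rw [if_neg (by rintro ⟨-, h⟩; exact j.2 h), if_neg (by intro h; exact j.2 (h ▸ (hrange _).2 ⟨i, rfl⟩))]
      rfl
    · rw [if_neg (by rintro ⟨h, -⟩; exact i.2 h), if_neg (by intro h; exact i.2 (h.symm ▸ (hrange _).2 ⟨j, rfl⟩))]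
      rfl
    · rw [if_neg (by rintro ⟨h, -⟩; exact i.2 h)]
      simp [Matrix.one_apply, Subtype.ext_iff]
  rw [← Matrix.det_submatrix_equiv_self e, hsub, Matrix.det_fromBlocks_zero₂₁, Matrix.det_one, mul_one]

lemma det_congr_aux (M M' : Matrix (Fin N) (Fin N) ℝ) (v : Fin N)
    (hM : ∀ i, M i v = if i = v then 1 else 0)
    (hM' : ∀ i, M' i v = if i = v then 1 else 0)
    (h : ∀ i j, i ≠ v → j ≠ v → M i j = M' i j) : M.det = M'.det := by
  rw [Matrix.det_apply', Matrix.det_apply']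
  refine Finset.sum_congr rfl fun σ _ => ?_
  by_cases hσ : σ v = v
  · congr 1
    refine Finset.prod_congr rfl fun i _ => ?_
    by_cases hi : i = v
    · subst hi; rw [hM, hM']
    · exact h _ _ (fun hc => hi (σ.injective (by rw [hc, hσ]))) hi
  · have h1 : M (σ v) v = 0 := by rw [hM]; simp [hσ]
    have h2 : M' (σ v) v = 0 := by rw [hM']; simp [hσ]
    rw [show (∏ i, M (σ i) i) = 0 from Finset.prod_eq_zero (Finset.mem_univ v) h1,
      show (∏ i, M' (σ i) i) = 0 from Finset.prod_eq_zero (Finset.mem_univ v) h2]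

lemma det_updateColumn_sub' (M : Matrix (Fin N) (Fin N) ℝ) (j : Fin N) (u v : Fin N → ℝ) :
    (M.updateCol j (u - v)).det = (M.updateCol j u).det - (M.updateCol j v).det := by
  have : u - v = u + (-1 : ℝ) • v := by ext i; simp; ring
  rw [this, Matrix.det_updateCol_add, Matrix.det_updateCol_smul]
  ring

lemma det_extMat_sub_single (M : Matrix (Fin N) (Fin N) ℝ) (S : Finset (Fin N)) (v : Fin N)
    (hv : v ∉ S) :
    (extMat (M - Matrix.single v v 1) (insert v S)).det
      = (extMat M (insert v S)).det - (extMat M S).det := by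
  classical
  set X := extMat M (insert v S) with hXdef
  have hX : extMat (M - Matrix.single v v 1) (insert v S)
      = X.updateCol v ((fun i => X i v) - (Pi.single v (1 : ℝ) : Fin N → ℝ)) := by
    ext i j
    rw [Matrix.updateCol_apply]
    by_cases hj : j = v
    · rw [hj, if_pos rfl]
      simp only [Pi.sub_apply]
      by_cases hi : i ∈ insert v S
      · have hb : i ∈ insert v S ∧ v ∈ insert v S := ⟨hi, Finset.mem_insert_self v S⟩
        simp only [extMat, Matrix.sub_apply, hXdef, Matrix.single, Matrix.of_apply,
          Pi.single_apply, if_pos hb]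
        by_cases hiv : i = v
        · simp [hiv]
        · simp [hiv, Ne.symm hiv]
      · have hiv : i ≠ v := fun h => hi (h ▸ Finset.mem_insert_self v S)
        have hiS : i ∉ S := fun h => hi (Finset.mem_insert_of_mem h)
        simp [extMat, hXdef, Pi.single_apply, hiv, hiS]
    · simp only [if_neg hj, extMat, hXdef, Matrix.sub_apply, Matrix.single, Matrix.of_apply]
      by_cases hmem : i ∈ insert v S ∧ j ∈ insert v S
      · rw [if_pos hmem, if_pos hmem]
        have : ¬ (v = i ∧ v = j) := by rintro ⟨-, h⟩; exact hj h.symm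
        rw [if_neg this]; ring
      · rw [if_neg hmem, if_neg hmem]
  rw [hX, det_updateColumn_sub', Matrix.updateCol_eq_self]
  congr 1
  refine det_congr_aux _ _ v (fun i => by rw [Matrix.updateCol_apply, if_pos rfl, Pi.single_apply])
    (fun i => ?_) (fun i j hi hj => ?_)
  · simp only [extMat]
    rw [if_neg (by rintro ⟨-, h⟩; exact hv h)]
  · rw [Matrix.updateCol_apply, if_neg hj]
    simp only [extMat, hXdef, Finset.mem_insert]
    by_cases hmem : i ∈ S ∧ j ∈ S
    · rw [if_pos ⟨Or.inr hmem.1, Or.inr hmem.2⟩, if_pos hmem]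
    · have : ¬ ((i = v ∨ i ∈ S) ∧ (j = v ∨ j ∈ S)) := by
        rintro ⟨hi', hj'⟩
        exact hmem ⟨hi'.resolve_left hi, hj'.resolve_left hj⟩
      rw [if_neg hmem, if_neg this]

lemma jointProb_split (P : Finset (Fin N) → ℝ) (U V : Finset (Fin N)) (v : Fin N) :
    jointProb P U V = jointProb P U (insert v V) + jointProb P (insert v U) V := by
  classical
  unfold jointProb
  rw [Finset.sum_filter, Finset.sum_filter, Finset.sum_filter, ← Finset.sum_add_distrib]
  refine Finset.sum_congr rfl fun C _ => ?_
  by_cases hU : U ⊆ C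
  · by_cases hd : Disjoint V C
    · by_cases hv : v ∈ C
      · have h1 : ¬(U ⊆ C ∧ Disjoint (insert v V) C) := by
          rintro ⟨-, h⟩; exact (Finset.disjoint_insert_left.1 h).1 hv
        have h2 : insert v U ⊆ C ∧ Disjoint V C := ⟨Finset.insert_subset hv hU, hd⟩
        rw [if_pos ⟨hU, hd⟩, if_neg h1, if_pos h2, zero_add]
      · have h1 : U ⊆ C ∧ Disjoint (insert v V) C :=
          ⟨hU, Finset.disjoint_insert_left.2 ⟨hv, hd⟩⟩
        have h2 : ¬(insert v U ⊆ C ∧ Disjoint V C) := by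
          rintro ⟨h, -⟩; exact hv (h (Finset.mem_insert_self v U))
        rw [if_pos ⟨hU, hd⟩, if_pos h1, if_neg h2, add_zero]
    · have h0 : ¬(U ⊆ C ∧ Disjoint V C) := fun h => hd h.2
      have h1 : ¬(U ⊆ C ∧ Disjoint (insert v V) C) := by
        rintro ⟨-, h⟩; exact hd (Finset.disjoint_insert_left.1 h).2
      rw [if_neg h0, if_neg h1, if_neg (fun h => hd h.2), add_zero]
  · have h0 : ¬(U ⊆ C ∧ Disjoint V C) := fun h => hU h.1
    have h1 : ¬(U ⊆ C ∧ Disjoint (insert v V) C) := fun h => hU h.1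
    have h2 : ¬(insert v U ⊆ C ∧ Disjoint V C) :=
      fun h => hU ((Finset.subset_insert v U).trans h.1)
    rw [if_neg h0, if_neg h1, if_neg h2, add_zero]

noncomputable def indMat (V : Finset (Fin N)) : Matrix (Fin N) (Fin N) ℝ :=
  Matrix.diagonal (fun i => if i ∈ V then 1 else 0)

lemma jointProb_eq_det (K : Matrix (Fin N) (Fin N) ℝ) (P : Finset (Fin N) → ℝ)
    (hP : ∀ A : Finset (Fin N),
      ∑ B ∈ Finset.univ.filter (fun B => A ⊆ B), P B = (subMat K A).det) :
    ∀ (V U : Finset (Fin N)), Disjoint U V →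
      jointProb P U V = (-1 : ℝ) ^ V.card * (extMat (K - indMat V) (U ∪ V)).det := by
  classical
  intro V
  induction V using Finset.induction_on with
  | empty =>
    intro U _
    have h1 : jointProb P U ∅ = (subMat K U).det := by
      rw [← hP U]
      unfold jointProb
      refine Finset.sum_congr ?_ fun _ _ => rfl
      refine Finset.filter_congr fun C _ => ?_
      simp
    have h2 : (extMat (K - indMat ∅) (U ∪ ∅)).det = (subMat K U).det := by
      rw [Finset.union_empty]
      have : K - indMat ∅ = K := by
        simp [indMat, Matrix.diagonal]
        rfl
      rw [this]
      exact det_extMat K U (fun i : {x // x ∈ U} => (i : Fin N)) Subtype.val_injective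
        (fun x => ⟨fun hx => ⟨⟨x, hx⟩, rfl⟩, fun ⟨i, hi⟩ => hi ▸ i.2⟩)
    rw [h1, ← h2]
    simp
  | insert a s hnotmem ih =>
    intro U hdisj
    have haU : a ∉ U := fun h => (Finset.disjoint_insert_right.1 hdisj).1 h
    have hUs : Disjoint U s := (Finset.disjoint_insert_right.1 hdisj).2
    have haUs : a ∉ U ∪ s := by simp [haU, hnotmem]
    have hdiff : K - indMat (insert a s) = (K - indMat s) - Matrix.single a a 1 := by
      ext i j
      simp only [Matrix.sub_apply, indMat, Matrix.diagonal_apply, Matrix.single,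
        Matrix.of_apply, Finset.mem_insert]
      by_cases hij : i = j
      · subst hij
        by_cases hia : i = a
        · subst hia; simp [hnotmem]
        · simp [hia, Ne.symm hia]
      · have hna : ¬(a = i ∧ a = j) := by rintro ⟨rfl, rfl⟩; exact hij rfl
        simp [hij, hna]
    have hsplit := jointProb_split P U s a
    have e1 := ih U hUs
    have e2 := ih (insert a U) (Finset.disjoint_insert_left.2 ⟨hnotmem, hUs⟩)
    have hUnion : U ∪ insert a s = insert a (U ∪ s) := by
      ext x; simp [Finset.mem_insert, Finset.mem_union]
    have hUnion2 : insert a U ∪ s = insert a (U ∪ s) := by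
      ext x; simp [Finset.mem_insert, Finset.mem_union]
    have hdet := det_extMat_sub_single (K - indMat s) (U ∪ s) a haUs
    have hcard : (insert a s).card = s.card + 1 := Finset.card_insert_of_notMem hnotmem
    rw [hUnion, hdiff, hdet, hcard]
    rw [hUnion2] at e2
    have : jointProb P U (insert a s) = jointProb P U s - jointProb P (insert a U) s := by
      rw [hsplit]; ring
    rw [this, e1, e2]
    ring

lemma det_extMat_schur (H : Matrix (Fin N) (Fin N) ℝ) (hH : Hᵀ = H)
    (W : Finset (Fin N)) (k l : Fin N) (hk : k ∉ W) (hl : l ∉ W) (hkl : k ≠ l)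
    (ha : (extMat H W).det ≠ 0) :
    (extMat H (insert k (insert l W))).det * (extMat H W).det ≤
      (extMat H (insert k W)).det * (extMat H (insert l W)).det := by
  classical
  set A : Matrix {x // x ∈ W} {x // x ∈ W} ℝ :=
    H.submatrix (fun i : {x // x ∈ W} => (i : Fin N)) (fun i : {x // x ∈ W} => (i : Fin N))
    with hAdef
  have hdetA : (extMat H W).det = A.det :=
    det_extMat H W _ Subtype.val_injective
      (fun x => ⟨fun hx => ⟨⟨x, hx⟩, rfl⟩, fun ⟨i, hi⟩ => hi ▸ i.2⟩)
  haveI : Invertible A := A.invertibleOfIsUnitDet (isUnit_iff_ne_zero.2 (hdetA ▸ ha))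
  set p : Fin 2 → Fin N := ![k, l] with hp
  have hp0 : p 0 = k := rfl
  have hp1 : p 1 = l := rfl
  have hpW : ∀ j, p j ∉ W := by
    intro j; fin_cases j
    · exact hk
    · exact hl
  have hpinj : Function.Injective p := by
    intro i j hij
    fin_cases i <;> fin_cases j <;> simp_all
  set B2 : Matrix {x // x ∈ W} (Fin 2) ℝ := H.submatrix (fun i => (i : Fin N)) p with hB2
  set C2 : Matrix (Fin 2) {x // x ∈ W} ℝ := H.submatrix p (fun i => (i : Fin N)) with hC2
  set D2 : Matrix (Fin 2) (Fin 2) ℝ := H.submatrix p p with hD2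
  set M : Matrix (Fin 2) (Fin 2) ℝ := D2 - C2 * A⁻¹ * B2 with hM
  -- symmetry
  have hAsym : Aᵀ = A := by rw [hAdef, Matrix.transpose_submatrix, hH]
  have hAinv : A⁻¹ᵀ = A⁻¹ := by rw [Matrix.transpose_nonsing_inv, hAsym]
  have hMsym : Mᵀ = M := by
    rw [hM, Matrix.transpose_sub, Matrix.transpose_mul, Matrix.transpose_mul,
      hB2, hC2, hD2, Matrix.transpose_submatrix, Matrix.transpose_submatrix,
      Matrix.transpose_submatrix, hH, hAinv, Matrix.mul_assoc]
  have hM01 : M 1 0 = M 0 1 := congrFun (congrFun hMsym 0) 1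
  -- the 2x2 bordered determinant
  have e4 : (extMat H (insert k (insert l W))).det = A.det * M.det := by
    have hinj : Function.Injective (Sum.elim (fun i : {x // x ∈ W} => (i : Fin N)) p) := by
      rintro (i | i) (j | j) h <;>
        simp only [Sum.elim_inl, Sum.elim_inr] at h
      · exact congrArg Sum.inl (Subtype.ext h)
      · exact absurd (h ▸ i.2) (hpW j)
      · exact absurd (h.symm ▸ j.2) (hpW i)
      · exact congrArg Sum.inr (hpinj h)
    have hrange : ∀ x, x ∈ insert k (insert l W) ↔
        ∃ i, Sum.elim (fun i : {x // x ∈ W} => (i : Fin N)) p i = x := by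
      intro x
      constructor
      · intro hx
        rcases Finset.mem_insert.1 hx with rfl | hx
        · exact ⟨Sum.inr 0, rfl⟩
        rcases Finset.mem_insert.1 hx with rfl | hx
        · exact ⟨Sum.inr 1, rfl⟩
        · exact ⟨Sum.inl ⟨x, hx⟩, rfl⟩
      · rintro ⟨i | i, rfl⟩
        · exact Finset.mem_insert_of_mem (Finset.mem_insert_of_mem i.2)
        · fin_cases i
          · exact Finset.mem_insert_self _ _
          · exact Finset.mem_insert_of_mem (Finset.mem_insert_self _ _)
    have hblock : H.submatrix (Sum.elim (fun i : {x // x ∈ W} => (i : Fin N)) p)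
        (Sum.elim (fun i : {x // x ∈ W} => (i : Fin N)) p) = Matrix.fromBlocks A B2 C2 D2 := by
      ext i j
      rcases i with i | i <;> rcases j with j | j <;> rfl
    rw [det_extMat H _ _ hinj hrange, hblock, Matrix.det_fromBlocks₁₁,
      Matrix.invOf_eq_nonsing_inv]
  -- the 1x1 bordered determinants
  have single : ∀ (v : Fin N) (j : Fin 2), p j = v → v ∉ W →
      (extMat H (insert v W)).det = A.det * M j j := by
    intro v j hpj hvW
    have hinj : Function.Injective
        (Sum.elim (fun i : {x // x ∈ W} => (i : Fin N)) (fun _ : Fin 1 => v)) := by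
      rintro (i | i) (j' | j') h <;>
        simp only [Sum.elim_inl, Sum.elim_inr] at h
      · exact congrArg Sum.inl (Subtype.ext h)
      · exact absurd (h ▸ i.2) hvW
      · exact absurd (h.symm ▸ j'.2) hvW
      · exact congrArg Sum.inr (Subsingleton.elim _ _)
    have hrange : ∀ x, x ∈ insert v W ↔
        ∃ i, Sum.elim (fun i : {x // x ∈ W} => (i : Fin N)) (fun _ : Fin 1 => v) i = x := by
      intro x
      constructor
      · intro hx
        rcases Finset.mem_insert.1 hx with rfl | hx
        · exact ⟨Sum.inr 0, rfl⟩
        · exact ⟨Sum.inl ⟨x, hx⟩, rfl⟩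
      · rintro ⟨i | i, rfl⟩
        · exact Finset.mem_insert_of_mem i.2
        · exact Finset.mem_insert_self _ _
    have hblock : H.submatrix (Sum.elim (fun i : {x // x ∈ W} => (i : Fin N)) (fun _ : Fin 1 => v))
        (Sum.elim (fun i : {x // x ∈ W} => (i : Fin N)) (fun _ : Fin 1 => v))
        = Matrix.fromBlocks A (H.submatrix (fun i : {x // x ∈ W} => (i : Fin N)) (fun _ : Fin 1 => v))
            (H.submatrix (fun _ : Fin 1 => v) (fun i : {x // x ∈ W} => (i : Fin N)))
            (H.submatrix (fun _ : Fin 1 => v) (fun _ : Fin 1 => v)) := by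
      ext i j
      rcases i with i | i <;> rcases j with j | j <;> rfl
    rw [det_extMat H _ _ hinj hrange, hblock, Matrix.det_fromBlocks₁₁,
      Matrix.invOf_eq_nonsing_inv, Matrix.det_fin_one]
    congr 1
    subst hpj
    simp [hM, hD2, hC2, hB2, Matrix.mul_apply, Matrix.sub_apply, Matrix.submatrix_apply,
      Finset.mul_sum, Finset.sum_mul]
  have ek := single k 0 hp0 hk
  have el := single l 1 hp1 hl
  rw [e4, ek, el, hdetA, Matrix.det_fin_two, hM01]
  nlinarith [sq_nonneg (A.det * M 0 1)]

lemma jointProb_nc (K : Matrix (Fin N) (Fin N) ℝ) (hKsym : Kᵀ = K)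
    (P : Finset (Fin N) → ℝ)
    (hP : ∀ A : Finset (Fin N),
      ∑ B ∈ Finset.univ.filter (fun B => A ⊆ B), P B = (subMat K A).det)
    (A B : Finset (Fin N)) (hAB : Disjoint A B)
    (k l : Fin N) (hkl : k ≠ l) (hk : k ∉ A ∪ B) (hl : l ∉ A ∪ B)
    (hpos : jointProb P A B ≠ 0) :
    jointProb P (insert k (insert l A)) B * jointProb P A B ≤
      jointProb P (insert k A) B * jointProb P (insert l A) B := by
  classical
  have hkB : k ∉ B := fun h => hk (Finset.mem_union_right _ h)
  have hlB : l ∉ B := fun h => hl (Finset.mem_union_right _ h)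
  set H := K - indMat B with hHdef
  have hHsym : Hᵀ = H := by
    rw [hHdef, Matrix.transpose_sub, hKsym, indMat, Matrix.diagonal_transpose]
  set s : ℝ := (-1) ^ B.card with hs
  have hss : s * s = 1 := by
    rw [hs, ← pow_add]
    exact Even.neg_one_pow ⟨B.card, rfl⟩
  have hd := jointProb_eq_det K P hP B
  have d1 := hd A hAB
  have dk := hd (insert k A) (Finset.disjoint_insert_left.2 ⟨hkB, hAB⟩)
  have dl := hd (insert l A) (Finset.disjoint_insert_left.2 ⟨hlB, hAB⟩)
  have d4 := hd (insert k (insert l A))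
    (Finset.disjoint_insert_left.2 ⟨hkB, Finset.disjoint_insert_left.2 ⟨hlB, hAB⟩⟩)
  rw [Finset.insert_union] at dk dl d4
  rw [Finset.insert_union] at d4
  have ha : (extMat H (A ∪ B)).det ≠ 0 := by
    intro h
    rw [h, mul_zero] at d1
    exact hpos d1
  have key := det_extMat_schur H hHsym (A ∪ B) k l hk hl hkl ha
  rw [d1, dk, dl, d4]
  calc s * (extMat H (insert k (insert l (A ∪ B)))).det * (s * (extMat H (A ∪ B)).det)
      = (s * s) * ((extMat H (insert k (insert l (A ∪ B)))).det * (extMat H (A ∪ B)).det) := by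
        ring
    _ = (extMat H (insert k (insert l (A ∪ B)))).det * (extMat H (A ∪ B)).det := by
        rw [hss, one_mul]
    _ ≤ (extMat H (insert k (A ∪ B))).det * (extMat H (insert l (A ∪ B))).det := key
    _ = (s * s) * ((extMat H (insert k (A ∪ B))).det * (extMat H (insert l (A ∪ B))).det) := by
        rw [hss, one_mul]
    _ = s * (extMat H (insert k (A ∪ B))).det * (s * (extMat H (insert l (A ∪ B))).det) := by
        ring

/-- Conditioning on the extra point `l` being absent from `Y` can only increase the
conditional probability that `k ∈ Y`. -/
theorem dpp_conditional_monotone_in_B {N : ℕ} (K : Matrix (Fin N) (Fin N) ℝ)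
    (hK : K.PosSemidef) (hIK : ((1 : Matrix (Fin N) (Fin N) ℝ) - K).PosSemidef)
    (P : Finset (Fin N) → ℝ) (hPnn : ∀ C, 0 ≤ P C)
    (hP : ∀ A : Finset (Fin N),
      ∑ B ∈ Finset.univ.filter (fun B => A ⊆ B), P B = (subMat K A).det)
    (A B : Finset (Fin N)) (hAB : Disjoint A B)
    (k l : Fin N) (hkl : k ≠ l) (hk : k ∉ A ∪ B) (hl : l ∉ A ∪ B)
    (hpos : 0 < jointProb P A B) (hposl : 0 < jointProb P A (insert l B)) :
    jointProb P (insert k A) (insert l B) / jointProb P A (insert l B) ≥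
      jointProb P (insert k A) B / jointProb P A B := by
  classical
  have hKsym : Kᵀ = K := hK.1
  rw [ge_iff_le, div_le_div_iff₀ hpos hposl]
  have s1 := jointProb_split P A B l
  have s2 := jointProb_split P (insert k A) B l
  rw [Finset.insert_comm] at s2
  have hNC := jointProb_nc K hKsym P hP A B hAB k l hkl hk hl (ne_of_gt hpos)
  have hu : jointProb P A (insert l B) = jointProb P A B - jointProb P (insert l A) B := by
    linarith
  have hx : jointProb P (insert k A) (insert l B)
      = jointProb P (insert k A) B - jointProb P (insert k (insert l A)) B := by
    linarith
  rw [hu, hx]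
  nlinarith [hNC]
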